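/- Let b ∈ K be nonzero. The polynomial f(x) = x^σ + b·x^(σ²) is not scattered if and only if there exist nonzero x₀, y₀ ∈ K such that b^(−1)·x₀^(q−1) + y₀^(σ−1) + 1 = 0 and Tr(y₀) = 0. -/

import Mathlib

open Polynomial Finset

lemma aux_pow_fix {K : Type*} [Field K] {q d : ℕ} {z : K} (hz : z ^ q ^ d = z) :
    ∀ m, z ^ q ^ (d * m) = z := by
  intro m
  induction m with
  | zero => simp
  | succ m ih =>
      have : q ^ (d * (m + 1)) = q ^ (d * m) * q ^ d := by ring
      rw [this, pow_mul, ih, hz]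

lemma aux_fixed_iff {K : Type*} [Field K] [Fintype K] {q n s : ℕ}
    (hn : 1 < n) (hsn : Nat.Coprime s n) (hK : Fintype.card K = q ^ n) (z : K) :
    z ^ q ^ s = z ↔ z ^ q = z := by
  have hcard : z ^ q ^ n = z := by rw [← hK]; exact FiniteField.pow_card z
  constructor
  · intro hz
    obtain ⟨m, -, hm⟩ := Nat.exists_mul_mod_eq_one_of_coprime hsn hn
    have hdm : s * m = n * (s * m / n) + 1 := by
      conv_lhs => rw [← Nat.div_add_mod (s * m) n, hm]
    have h1 : z ^ q ^ (s * m) = z := aux_pow_fix hz m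
    rw [hdm, pow_add, pow_one, pow_mul, aux_pow_fix hcard (s * m / n)] at h1
    exact h1
  · intro hz
    have := aux_pow_fix (d := 1) (by simpa using hz) s
    simpa using this

lemma aux_card_le {K : Type*} [Field K] [Fintype K] (P : K[X]) (hP : P ≠ 0)
    {α : Type*} (pred : α → Prop) (f : α → K) (hf : Function.Injective f)
    (h : ∀ a, pred a → P.eval (f a) = 0) :
    Nat.card {a // pred a} ≤ P.natDegree := by
  classical
  have h1 : Nat.card {a // pred a} ≤ Nat.card P.roots.toFinset := by
    apply Nat.card_le_card_of_injective
      (fun a => (⟨f a.1, by rw [Multiset.mem_toFinset, mem_roots hP]; exact h a.1 a.2⟩ :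
        P.roots.toFinset))
    intro a b hab
    exact Subtype.ext (hf (congrArg Subtype.val hab))
  calc Nat.card {a // pred a} ≤ Nat.card P.roots.toFinset := h1
    _ = P.roots.toFinset.card := Nat.card_eq_finsetCard _
    _ ≤ Multiset.card P.roots := P.roots.toFinset_card_le
    _ ≤ P.natDegree := P.card_roots'

lemma aux_mem_of_card {α : Type*} [Fintype α] (P Q : α → Prop)
    (h : ∀ a, P a → Q a) (hc : Nat.card {a // Q a} ≤ Nat.card {a // P a}) :
    ∀ a, Q a → P a := by
  classical
  have hsub : univ.filter P ⊆ univ.filter Q := by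
    intro a ha; simp only [mem_filter, mem_univ, true_and] at *; exact h a ha
  have hcard : (univ.filter Q).card ≤ (univ.filter P).card := by
    simpa [Nat.card_eq_fintype_card, Fintype.card_subtype] using hc
  have heq := Finset.eq_of_subset_of_card_le hsub hcard
  intro a ha
  have : a ∈ univ.filter P := heq ▸ (by simp [ha])
  simpa using this

lemma aux_tr_pow_q {K : Type*} [Field K] [Fintype K] {q n : ℕ}
    (hK : Fintype.card K = q ^ n) (z : K) :
    (∑ i ∈ Finset.range n, (z ^ q) ^ q ^ i) = ∑ i ∈ Finset.range n, z ^ q ^ i := by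
  have hterm : ∀ i, (z ^ q) ^ q ^ i = z ^ q ^ (i + 1) := by
    intro i
    rw [← pow_mul, ← pow_succ']
  simp_rw [hterm]
  have h1 := Finset.sum_range_succ' (fun i => z ^ q ^ i) n
  have h2 := Finset.sum_range_succ (fun i => z ^ q ^ i) n
  have hzn : z ^ q ^ n = z := by rw [← hK]; exact FiniteField.pow_card z
  have h3 : (∑ i ∈ Finset.range n, z ^ q ^ (i + 1)) + z ^ q ^ 0 =
      (∑ i ∈ Finset.range n, z ^ q ^ i) + z ^ q ^ n := by rw [← h1, h2]
  rw [hzn, pow_zero, pow_one] at h3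
  exact add_right_cancel h3

lemma aux_tr_pow_qs {K : Type*} [Field K] [Fintype K] {q n : ℕ}
    (hK : Fintype.card K = q ^ n) (s : ℕ) (z : K) :
    (∑ i ∈ Finset.range n, (z ^ q ^ s) ^ q ^ i) = ∑ i ∈ Finset.range n, z ^ q ^ i := by
  induction s generalizing z with
  | zero => simp
  | succ s ih =>
      have h : z ^ q ^ (s + 1) = (z ^ q ^ s) ^ q := by rw [← pow_mul, pow_succ]
      rw [h, aux_tr_pow_q hK, ih]


lemma aux_additive {K : Type*} [Field K] [Fintype K] {p k q n s : ℕ} [CharP K p]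
    (hp : p.Prime) (hq2 : 2 ≤ q) (hqp : q = p ^ k) (hn : 3 ≤ n) (hs : 0 < s)
    (hsn : Nat.Coprime s n) (hK : Fintype.card K = q ^ n) :
    ∀ y : K, (∑ i ∈ Finset.range n, y ^ q ^ i) = 0 → ∃ w : K, w ^ q ^ s - w = y := by
  classical
  haveI := Fact.mk hp
  have hn1 : 1 < n := by omega
  have hq0 : 0 < q := by omega
  have hadd : ∀ (i : ℕ) (a c : K), (a + c) ^ q ^ i = a ^ q ^ i + c ^ q ^ i := by
    intro i a c; rw [hqp, ← pow_mul]; exact add_pow_char_pow a c p (k * i)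
  let φ : K →+ K := AddMonoidHom.mk' (fun z => z ^ q ^ s - z)
    (fun a c => by show (a + c) ^ q ^ s - (a + c) = _; rw [hadd s]; ring)
  let τ : K →+ K := AddMonoidHom.mk' (fun z => ∑ i ∈ Finset.range n, z ^ q ^ i)
    (fun a c => by
      show ∑ i ∈ Finset.range n, (a + c) ^ q ^ i = _
      rw [← Finset.sum_add_distrib]
      exact Finset.sum_congr rfl fun i _ => hadd i a c)
  have hφz : ∀ z, φ z = z ^ q ^ s - z := fun z => rfl
  have hτz : ∀ z, τ z = ∑ i ∈ Finset.range n, z ^ q ^ i := fun z => rfl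
  have hrk : ∀ z : K, (∃ w, φ w = z) → τ z = 0 := by
    rintro _ ⟨z, rfl⟩
    rw [hφz, map_sub, hτz, hτz, aux_tr_pow_qs hK s z, sub_self]
  -- kernel of φ has at most q elements
  have hdeg : (X ^ q - X : K[X]).natDegree = q := by
    rw [natDegree_sub_eq_left_of_natDegree_lt, natDegree_X_pow]
    rw [natDegree_X, natDegree_X_pow]; omega
  have hXqne : (X ^ q - X : K[X]) ≠ 0 := by
    intro h; rw [h] at hdeg; simp at hdeg; omega
  have hker : Nat.card {z : K // φ z = 0} ≤ q := by
    have h := aux_card_le (X ^ q - X : K[X]) hXqne (fun z : K => φ z = 0) id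
      Function.injective_id ?_
    · rwa [hdeg] at h
    · intro z hz
      rw [hφz, sub_eq_zero] at hz
      have h2 : z ^ q = z := (aux_fixed_iff hn1 hsn hK z).1 hz
      simp [h2]
  -- kernel of τ has at most q^(n-1) elements
  set P : K[X] := ∑ i ∈ Finset.range n, X ^ q ^ i with hP
  have hco : P.coeff (q ^ (n - 1)) = 1 := by
    rw [hP, finset_sum_coeff, Finset.sum_eq_single (n - 1)]
    · simp [coeff_X_pow]
    · intro i hi hne
      rw [coeff_X_pow, if_neg]
      intro h
      exact hne (Nat.pow_right_injective hq2 h.symm)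
    · intro h
      exact absurd (Finset.mem_range.2 (by omega)) h
  have hPne : P ≠ 0 := by
    intro h; rw [h] at hco; simp at hco
  have hdegP : P.natDegree ≤ q ^ (n - 1) := by
    apply natDegree_sum_le_of_forall_le
    intro i hi
    rw [natDegree_X_pow]
    exact Nat.pow_le_pow_right hq0 (by exact Nat.le_sub_one_of_lt (Finset.mem_range.1 hi))
  have hkτ : Nat.card {z : K // τ z = 0} ≤ q ^ (n - 1) := by
    have h := aux_card_le P hPne (fun z : K => τ z = 0) id Function.injective_id ?_
    · exact le_trans h hdegP
    · intro z hz
      rw [hτz] at hz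
      rw [hP]
      simp only [eval_finset_sum, eval_pow, eval_X]
      exact hz
  -- Lagrange counting
  have hlag := AddSubgroup.card_eq_card_quotient_mul_card_addSubgroup φ.ker
  have hr : Nat.card (K ⧸ φ.ker) = Nat.card φ.range :=
    Nat.card_congr (QuotientAddGroup.quotientKerEquivRange φ).toEquiv
  have hkeq : Nat.card φ.ker = Nat.card {z : K // φ z = 0} :=
    Nat.card_congr (Equiv.subtypeEquivRight fun z => by
      simp [AddMonoidHom.mem_ker])
  have hreq : Nat.card φ.range = Nat.card {z : K // ∃ w, φ w = z} :=
    Nat.card_congr (Equiv.subtypeEquivRight fun z => by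
      simp [AddMonoidHom.mem_range])
  have hcardK : Nat.card K = q ^ n := by rw [Nat.card_eq_fintype_card, hK]
  have hbig : q ^ (n - 1) ≤ Nat.card {z : K // ∃ w, φ w = z} := by
    have h1 : q ^ n = Nat.card {z : K // ∃ w, φ w = z} * Nat.card {z : K // φ z = 0} := by
      rw [← hcardK, hlag, hr, hkeq, hreq]
    have h2 : q ^ n ≤ Nat.card {z : K // ∃ w, φ w = z} * q := by
      calc q ^ n = _ := h1
        _ ≤ _ := Nat.mul_le_mul_left _ hker
    have h3 : q ^ (n - 1) * q ≤ Nat.card {z : K // ∃ w, φ w = z} * q := by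
      rw [← pow_succ]
      have : n - 1 + 1 = n := by omega
      rw [this]; exact h2
    exact Nat.le_of_mul_le_mul_right h3 (by omega)
  intro y hy
  obtain ⟨w, hw⟩ := aux_mem_of_card (fun z : K => ∃ w, φ w = z) (fun z => τ z = 0)
    hrk (le_trans hkτ hbig) y (by show τ y = 0; rw [hτz]; exact hy)
  exact ⟨w, by rw [← hφz]; exact hw⟩

lemma aux_mult {K : Type*} [Field K] [Fintype K] {q n s : ℕ}
    (hq2 : 2 ≤ q) (hn : 3 ≤ n) (hs : 0 < s) (hsn : Nat.Coprime s n)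
    (hK : Fintype.card K = q ^ n) :
    ∀ x₀ : K, x₀ ≠ 0 → ∃ u : K, u ≠ 0 ∧ u ^ (q ^ s - 1) = x₀ ^ (q - 1) := by
  classical
  have hn1 : 1 < n := by omega
  have hq0 : 0 < q := by omega
  have hqs1 : 1 ≤ q ^ s := Nat.one_le_pow _ _ hq0
  have hqn1 : q ≤ q ^ n := le_trans (le_refl q) (by
    calc q = q ^ 1 := (pow_one q).symm
      _ ≤ q ^ n := Nat.pow_le_pow_right hq0 (by omega))
  have hNc : Nat.card Kˣ = q ^ n - 1 := by
    rw [Nat.card_eq_fintype_card, Fintype.card_units, hK]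
  -- divisibilities
  have hdvd1 : (q - 1) ∣ q ^ n - 1 := by
    have := Nat.sub_dvd_pow_sub_pow q 1 n
    simpa using this
  have hdvd2 : (q - 1) ∣ q ^ s - 1 := by
    have := Nat.sub_dvd_pow_sub_pow q 1 s
    simpa using this
  set m := (q ^ n - 1) / (q - 1) with hm
  have hmm : (q - 1) * m = q ^ n - 1 := Nat.mul_div_cancel' hdvd1
  obtain ⟨e, he⟩ := hdvd2
  have hmpos : 1 ≤ m := Nat.one_le_div_iff (by omega) |>.2 (by omega)
  -- kernel equivalence
  have hkeriff : ∀ u : Kˣ, u ^ (q - 1) = 1 ↔ u ^ (q ^ s - 1) = 1 := by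
    intro u
    have h1 : ∀ d : ℕ, 1 ≤ d → ((u : K) ^ (d - 1) = 1 ↔ (u : K) ^ d = u) := by
      intro d hd
      constructor
      · intro h
        have : (u : K) ^ d = (u : K) ^ (d - 1) * u := by
          rw [← pow_succ]; congr 1; omega
        rw [this, h, one_mul]
      · intro h
        have : (u : K) ^ (d - 1) * u = 1 * u := by
          rw [one_mul, ← pow_succ]
          rw [(by omega : d - 1 + 1 = d)]; exact h
        exact mul_right_cancel₀ u.ne_zero this
    have h2 := h1 q (by omega)
    have h3 := h1 (q ^ s) hqs1
    have h4 := aux_fixed_iff hn1 hsn hK (u : K)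
    constructor
    · intro h
      have hv : (u : K) ^ (q - 1) = 1 := by
        have := congrArg Units.val h
        rwa [Units.val_pow_eq_pow_val, Units.val_one] at this
      apply Units.ext
      rw [Units.val_pow_eq_pow_val, Units.val_one]
      exact h3.2 (h4.2 (h2.1 hv))
    · intro h
      have hv : (u : K) ^ (q ^ s - 1) = 1 := by
        have := congrArg Units.val h
        rwa [Units.val_pow_eq_pow_val, Units.val_one] at this
      apply Units.ext
      rw [Units.val_pow_eq_pow_val, Units.val_one]
      exact h2.2 (h4.1 (h3.1 hv))
  -- predicates
  set R1 : Kˣ → Prop := fun z => ∃ u : Kˣ, u ^ (q - 1) = z with hR1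
  set R2 : Kˣ → Prop := fun z => ∃ u : Kˣ, u ^ (q ^ s - 1) = z with hR2
  set S : Kˣ → Prop := fun z => z ^ m = 1 with hS
  have hR1S : ∀ z, R1 z → S z := by
    rintro _ ⟨u, rfl⟩
    show (u ^ (q - 1)) ^ m = 1
    rw [← pow_mul, hmm, ← hNc]
    exact pow_card_eq_one'
  have hR2S : ∀ z, R2 z → S z := by
    rintro _ ⟨u, rfl⟩
    show (u ^ (q ^ s - 1)) ^ m = 1
    have hme : (q ^ s - 1) * m = (q ^ n - 1) * e := by rw [he, ← hmm]; ring
    rw [← pow_mul, hme, mul_comm, pow_mul, ← hNc, pow_card_eq_one']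
  -- card S ≤ m
  have hPS : ((X : K[X]) ^ m - C 1) ≠ 0 := by
    intro h
    have := natDegree_X_pow_sub_C (n := m) (r := (1 : K))
    rw [h] at this
    simp at this
    omega
  have hcardS : Nat.card {z : Kˣ // S z} ≤ m := by
    have h := aux_card_le ((X : K[X]) ^ m - C 1) hPS S (fun z : Kˣ => (z : K))
      (fun a b hab => Units.ext hab) ?_
    · rwa [natDegree_X_pow_sub_C] at h
    · intro z hz
      have hz' : z ^ m = 1 := hz
      have : (z : K) ^ m = 1 := by
        have := congrArg Units.val hz'
        rwa [Units.val_pow_eq_pow_val, Units.val_one] at this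
      simp [this]
  -- Lagrange for the two power homs
  have hlag : ∀ d : ℕ, (∀ u : Kˣ, u ^ d = 1 ↔ u ^ (q - 1) = 1) →
      q ^ n - 1 = Nat.card {z : Kˣ // ∃ u : Kˣ, u ^ d = z} * Nat.card {u : Kˣ // u ^ (q - 1) = 1} := by
    intro d hd
    set f : Kˣ →* Kˣ := powMonoidHom d with hf
    have h1 := Subgroup.card_eq_card_quotient_mul_card_subgroup f.ker
    have h2 : Nat.card (Kˣ ⧸ f.ker) = Nat.card f.range :=
      Nat.card_congr (QuotientGroup.quotientKerEquivRange f).toEquiv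
    have h3 : Nat.card f.range = Nat.card {z : Kˣ // ∃ u : Kˣ, u ^ d = z} :=
      Nat.card_congr (Equiv.subtypeEquivRight fun z => by
        simp [MonoidHom.mem_range, hf, powMonoidHom_apply])
    have h4 : Nat.card f.ker = Nat.card {u : Kˣ // u ^ (q - 1) = 1} :=
      Nat.card_congr (Equiv.subtypeEquivRight fun z => by
        simp only [MonoidHom.mem_ker, hf, powMonoidHom_apply]
        exact hd z)
    rw [← hNc, h1, h2, h3, h4]
  have hlag1 := hlag (q - 1) (fun u => Iff.rfl)
  have hlag2 := hlag (q ^ s - 1) (fun u => (hkeriff u).symm)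
  have hdle : Nat.card {u : Kˣ // u ^ (q - 1) = 1} ≤ q - 1 := by
    have hP : ((X : K[X]) ^ (q - 1) - C 1) ≠ 0 := by
      intro h
      have := natDegree_X_pow_sub_C (n := q - 1) (r := (1 : K))
      rw [h] at this
      simp at this
      omega
    have h := aux_card_le ((X : K[X]) ^ (q - 1) - C 1) hP (fun u : Kˣ => u ^ (q - 1) = 1)
      (fun z : Kˣ => (z : K)) (fun a b hab => Units.ext hab) ?_
    · rwa [natDegree_X_pow_sub_C] at h
    · intro z hz
      have hz' : z ^ (q - 1) = 1 := hz
      have : (z : K) ^ (q - 1) = 1 := by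
        have := congrArg Units.val hz'
        rwa [Units.val_pow_eq_pow_val, Units.val_one] at this
      simp [this]
  have hdpos : 0 < Nat.card {u : Kˣ // u ^ (q - 1) = 1} := by
    have : Nonempty {u : Kˣ // u ^ (q - 1) = 1} := ⟨⟨1, one_pow _⟩⟩
    exact Nat.card_pos
  -- card R1 ≥ m
  have hcardR1 : m ≤ Nat.card {z : Kˣ // R1 z} := by
    have h1 : m * (q - 1) ≤ Nat.card {z : Kˣ // R1 z} * (q - 1) := by
      calc m * (q - 1) = q ^ n - 1 := by rw [mul_comm]; exact hmm
        _ = Nat.card {z : Kˣ // R1 z} * Nat.card {u : Kˣ // u ^ (q - 1) = 1} := hlag1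
        _ ≤ Nat.card {z : Kˣ // R1 z} * (q - 1) := Nat.mul_le_mul_left _ hdle
    exact Nat.le_of_mul_le_mul_right h1 (by omega)
  have hcardR12 : Nat.card {z : Kˣ // R1 z} = Nat.card {z : Kˣ // R2 z} := by
    have := hlag1.symm.trans hlag2
    exact Nat.eq_of_mul_eq_mul_right hdpos this
  -- conclude R2 ⊇ S
  have hSR2 : ∀ z, S z → R2 z := by
    apply aux_mem_of_card R2 S hR2S
    calc Nat.card {z : Kˣ // S z} ≤ m := hcardS
      _ ≤ Nat.card {z : Kˣ // R1 z} := hcardR1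
      _ = Nat.card {z : Kˣ // R2 z} := hcardR12
  intro x₀ hx₀
  set xu : Kˣ := Units.mk0 x₀ hx₀ with hxu
  obtain ⟨u, hu⟩ := hSR2 (xu ^ (q - 1)) (hR1S _ ⟨xu, rfl⟩)
  refine ⟨(u : K), u.ne_zero, ?_⟩
  have hv := congrArg Units.val hu
  rw [Units.val_pow_eq_pow_val, Units.val_pow_eq_pow_val] at hv
  simpa [hxu] using hv

/-- `x^σ + b x^(σ²)` is not scattered iff the curve
`b⁻¹ X^(q-1) + Y^(σ-1) + 1 = 0` has a point `(x₀, y₀)` with nonzero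
coordinates such that `Tr(y₀) = 0`. -/
lemma aux_key {K : Type*} [Field K] (q s : ℕ) (hq1 : 1 ≤ q ^ s) (b : K)
    (hsub : ∀ a c : K, (a - c) ^ q ^ s = a ^ q ^ s - c ^ q ^ s)
    (w t : K) (hb : b ≠ 0) (ht : t ≠ 0) (hw : w ^ q ^ s ≠ w) :
    t * ((w * t) ^ q ^ s + b * (w * t) ^ (q ^ s) ^ 2) -
      (w * t) * (t ^ q ^ s + b * t ^ (q ^ s) ^ 2) =
    b * (t ^ (q ^ s) ^ 2 * t) * (w ^ q ^ s - w) *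
      (b⁻¹ * (t ^ q ^ s * (t ^ (q ^ s) ^ 2)⁻¹) + (w ^ q ^ s - w) ^ (q ^ s - 1) + 1) := by
  have hy : w ^ q ^ s - w ≠ 0 := sub_ne_zero.2 hw
  have hpow2 : ∀ z : K, z ^ (q ^ s) ^ 2 = (z ^ q ^ s) ^ q ^ s := by
    intro z; rw [sq (q ^ s), pow_mul]
  have hys : (w ^ q ^ s - w) ^ (q ^ s - 1) =
      ((w ^ q ^ s) ^ q ^ s - w ^ q ^ s) * (w ^ q ^ s - w)⁻¹ := by
    have h1 : (w ^ q ^ s - w) ^ (q ^ s - 1) * (w ^ q ^ s - w) = (w ^ q ^ s - w) ^ q ^ s := by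
      rw [← pow_succ, Nat.sub_add_cancel hq1]
    have h2 : (w ^ q ^ s - w) ^ q ^ s = (w ^ q ^ s) ^ q ^ s - w ^ q ^ s := hsub _ _
    rw [← h2, ← h1, mul_inv_cancel_right₀ hy]
  simp only [hpow2, mul_pow]
  rw [hys]
  have ht2 : (t ^ q ^ s) ^ q ^ s ≠ 0 := pow_ne_zero _ (pow_ne_zero _ ht)
  field_simp
  ring

theorem stmt_8 (q n s : ℕ) (hq : IsPrimePow q) (hn : 3 ≤ n) (hs : 0 < s)
    (hsn : Nat.Coprime s n) (K : Type*) [Field K] [Fintype K]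
    (hK : Fintype.card K = q ^ n) (b : K) (hb : b ≠ 0) :
    (¬∀ x t : K, x ≠ 0 → t ≠ 0 →
      x * (t ^ (q ^ s) + b * t ^ ((q ^ s) ^ 2)) =
        t * (x ^ (q ^ s) + b * x ^ ((q ^ s) ^ 2)) →
      ∃ c : K, c ^ q = c ∧ x = c * t) ↔
    ∃ x₀ y₀ : K, x₀ ≠ 0 ∧ y₀ ≠ 0 ∧
      b⁻¹ * x₀ ^ (q - 1) + y₀ ^ (q ^ s - 1) + 1 = 0 ∧
      ∑ i ∈ Finset.range n, y₀ ^ (q ^ i) = 0 := by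
  classical
  obtain ⟨p, k, hpp, hk, hqk⟩ := hq
  have hp : p.Prime := hpp.nat_prime
  have hqp : q = p ^ k := hqk.symm
  have hq2 : 2 ≤ q := by
    rw [hqp]
    calc 2 ≤ p := hp.two_le
      _ = p ^ 1 := (pow_one p).symm
      _ ≤ p ^ k := Nat.pow_le_pow_right hp.pos hk
  have hq1s : 1 ≤ q ^ s := Nat.one_le_pow _ _ (by omega)
  -- characteristic
  haveI hringchar : CharP K (ringChar K) := ringChar.charP K
  obtain ⟨m, hrp, hcard⟩ := FiniteField.card K (ringChar K)
  haveI hcharp : CharP K p := by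
    have h1 : p ^ (k * n) = ringChar K ^ (m : ℕ) := by
      rw [← hcard, hK, hqp, ← pow_mul]
    have h2 : p ∣ ringChar K ^ (m : ℕ) := by
      rw [← h1]
      exact dvd_pow_self p (by positivity)
    have h3 : p = ringChar K := (Nat.prime_dvd_prime_iff_eq hp hrp).1 (hp.dvd_of_dvd_pow h2)
    rw [h3]
    exact hringchar
  haveI := Fact.mk hp
  have hsub : ∀ a c : K, (a - c) ^ q ^ s = a ^ q ^ s - c ^ q ^ s := by
    intro a c; rw [hqp, ← pow_mul]; exact sub_pow_char_pow a c (k * s)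
  have hsubi : ∀ (i : ℕ) (a c : K), (a - c) ^ q ^ i = a ^ q ^ i - c ^ q ^ i := by
    intro i a c; rw [hqp, ← pow_mul]; exact sub_pow_char_pow a c (k * i)
  have hfix : ∀ z : K, z ^ q ^ s = z ↔ z ^ q = z :=
    aux_fixed_iff (by omega) hsn hK
  have hsurj : ∀ u : K, ∃ t : K, t ^ q ^ s = u := by
    have hinj : Function.Injective (fun z : K => z ^ q ^ s) := by
      intro a c h
      have h' : a ^ q ^ s = c ^ q ^ s := h
      have h0 : (a - c) ^ q ^ s = 0 := by rw [hsub, h', sub_self]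
      have h1 := pow_eq_zero_iff (n := q ^ s) (by positivity) |>.1 h0
      exact sub_eq_zero.1 h1
    intro u
    exact Finite.injective_iff_surjective.1 hinj u
  have hdvd : (q - 1) ∣ (q ^ s - 1) := by simpa using Nat.sub_dvd_pow_sub_pow q 1 s
  constructor
  · -- not scattered → curve point
    intro hns
    push_neg at hns
    obtain ⟨x, t, hx, ht, heq, hnc⟩ := hns
    set w : K := x * t⁻¹ with hw
    have hxwt : x = w * t := by
      rw [hw]; field_simp
    have hwfix : w ^ q ^ s ≠ w := by
      intro hfx
      exact hnc w ((hfix w).1 hfx) hxwt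
    have hkey := aux_key q s hq1s b hsub w t hb ht hwfix
    rw [← hxwt] at hkey
    have h0 : t * (x ^ q ^ s + b * x ^ (q ^ s) ^ 2) -
        x * (t ^ q ^ s + b * t ^ (q ^ s) ^ 2) = 0 := by rw [← heq]; ring
    rw [h0] at hkey
    have hy : w ^ q ^ s - w ≠ 0 := sub_ne_zero.2 hwfix
    have hfac : b⁻¹ * (t ^ q ^ s * (t ^ (q ^ s) ^ 2)⁻¹) +
        (w ^ q ^ s - w) ^ (q ^ s - 1) + 1 = 0 := by
      have h1 := hkey.symm
      rcases mul_eq_zero.1 h1 with h2 | h2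
      · rcases mul_eq_zero.1 h2 with h3 | h3
        · rcases mul_eq_zero.1 h3 with h4 | h4
          · exact absurd h4 hb
          · exact absurd h4 (mul_ne_zero (pow_ne_zero _ ht) ht)
        · exact absurd h3 hy
      · exact h2
    set T : K := t ^ q ^ s with hT
    have hTne : T ≠ 0 := pow_ne_zero _ ht
    set x₀ : K := (T⁻¹) ^ ((q ^ s - 1) / (q - 1)) with hx₀def
    have hx₀ : x₀ ≠ 0 := pow_ne_zero _ (inv_ne_zero hTne)
    have hTT : t ^ (q ^ s) ^ 2 = T ^ q ^ s := by rw [hT, sq (q ^ s), pow_mul]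
    have hTpow : T ^ (q ^ s - 1) * T = T ^ q ^ s := by
      rw [← pow_succ, Nat.sub_add_cancel hq1s]
    have hx₀pow : x₀ ^ (q - 1) = T * (T ^ q ^ s)⁻¹ := by
      rw [hx₀def, ← pow_mul, Nat.div_mul_cancel hdvd, inv_pow, ← hTpow]
      field_simp
    refine ⟨x₀, w ^ q ^ s - w, hx₀, hy, ?_, ?_⟩
    · rw [hx₀pow, ← hTT]
      exact hfac
    · calc ∑ i ∈ Finset.range n, (w ^ q ^ s - w) ^ q ^ i
          = ∑ i ∈ Finset.range n, ((w ^ q ^ s) ^ q ^ i - w ^ q ^ i) :=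
            Finset.sum_congr rfl (fun i _ => hsubi i _ _)
        _ = (∑ i ∈ Finset.range n, (w ^ q ^ s) ^ q ^ i) - ∑ i ∈ Finset.range n, w ^ q ^ i :=
            Finset.sum_sub_distrib _ _
        _ = 0 := by rw [aux_tr_pow_qs hK s w, sub_self]
  · -- curve point → not scattered
    rintro ⟨x₀, y₀, hx₀, hy₀, hcurve, htr⟩
    intro hall
    obtain ⟨w, hwdef⟩ := aux_additive hp hq2 hqp hn hs hsn hK y₀ htr
    have hwfix : w ^ q ^ s ≠ w := by
      intro h; apply hy₀; rw [← hwdef, h, sub_self]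
    obtain ⟨u, hu0, huu⟩ := aux_mult hq2 hn hs hsn hK x₀ hx₀
    obtain ⟨t, htdef⟩ := hsurj u⁻¹
    have ht : t ≠ 0 := by
      intro h
      rw [h, zero_pow (by positivity)] at htdef
      exact hu0 (inv_eq_zero.1 htdef.symm)
    have hwne : w ≠ 0 := by
      intro h; apply hwfix; rw [h, zero_pow (by positivity)]
    have hkey := aux_key q s hq1s b hsub w t hb ht hwfix
    have hTfac : t ^ q ^ s * (t ^ (q ^ s) ^ 2)⁻¹ = x₀ ^ (q - 1) := by
      have h1 : t ^ (q ^ s) ^ 2 = (u⁻¹) ^ q ^ s := by rw [← htdef, sq (q ^ s), pow_mul]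
      have h2 : u ^ q ^ s = u ^ (q ^ s - 1) * u := by
        rw [← pow_succ, Nat.sub_add_cancel hq1s]
      rw [htdef, h1, inv_pow, inv_inv, h2, ← huu, mul_comm (u ^ (q ^ s - 1)) u,
        inv_mul_cancel_left₀ hu0]
    rw [hTfac, hwdef, hcurve, mul_zero] at hkey
    have heq2 : (w * t) * (t ^ q ^ s + b * t ^ (q ^ s) ^ 2) =
        t * ((w * t) ^ q ^ s + b * (w * t) ^ (q ^ s) ^ 2) := (sub_eq_zero.1 hkey).symm
    obtain ⟨c, hc, hxc⟩ := hall (w * t) t (mul_ne_zero hwne ht) ht heq2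
    have hcw : w = c := mul_right_cancel₀ ht hxc
    apply hwfix
    rw [hcw]
    exact (hfix c).2 hc
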